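/- arXiv:math/0104012 — 9 statements merged into one kernel-verified Lean document; each statement's English description precedes it below -/
import Mathlib

section
/- Let n be an odd positive integer. Then for the dihedral group E_{2n} of order 2n (DihedralGroup n in Mathlib), D(E_{2n}) = σ(n) + 2n, where σ(n) is the sum of the divisors of n. -/
/-- `D G` is the sum of the orders of all normal subgroups of `G`
(including the trivial subgroup and `G` itself). -/
noncomputable def D (G : Type*) [Group G] : ℕ :=
  ∑ᶠ N ∈ {N : Subgroup G | N.Normal}, Nat.card N

open Subgroup DihedralGroup

lemma cyclic_card_inj {G : Type*} [Group G] [Fintype G] [IsCyclic G]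
    {H K : Subgroup G} (h : Nat.card H = Nat.card K) : H = K := by
  classical
  have key : ∀ (H : Subgroup G),
      (H : Set G).toFinset = Finset.univ.filter (fun a : G => a ^ Nat.card H = 1) := by
    intro H
    have hd : 0 < Nat.card H := Nat.card_pos
    apply Finset.eq_of_subset_of_card_le
    · intro x hx
      simp only [Set.mem_toFinset, SetLike.mem_coe] at hx
      simp only [Finset.mem_filter, Finset.mem_univ, true_and]
      have h1 : (⟨x, hx⟩ : H) ^ Nat.card H = 1 := pow_card_eq_one'
      have h2 := congrArg (Subtype.val) h1
      rwa [SubmonoidClass.coe_pow, OneMemClass.coe_one] at h2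
    · calc (Finset.univ.filter (fun a : G => a ^ Nat.card H = 1)).card
          ≤ Nat.card H := by
            have := IsCyclic.card_pow_eq_one_le (α := G) (n := Nat.card H) hd
            convert this using 2
        _ = (H : Set G).toFinset.card := by
            rw [Set.toFinset_card, Nat.card_eq_fintype_card]
            rfl
  have hHK := (key H).trans (h ▸ (key K).symm)
  apply SetLike.ext'
  rw [← Set.coe_toFinset (H : Set G), hHK, Set.coe_toFinset]

lemma cyclic_exists_subgroup {G : Type*} [Group G] [Finite G] [IsCyclic G]
    {d : ℕ} (hd : d ∣ Nat.card G) : ∃ H : Subgroup G, Nat.card H = d := by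
  obtain ⟨g, hg⟩ := IsCyclic.exists_generator (α := G)
  have hord : orderOf g = Nat.card G := orderOf_eq_card_of_forall_mem_zpowers hg
  refine ⟨zpowers (g ^ (Nat.card G / d)), ?_⟩
  rw [Nat.card_zpowers, orderOf_pow, hord,
    Nat.gcd_eq_right (Nat.div_dvd_of_dvd hd), Nat.div_div_self hd Nat.card_pos.ne']

/-- For odd positive `n`, `D` of the dihedral group of order `2n` equals `σ(n) + 2n`,
where `σ(n)` is the sum of the divisors of `n`. -/
theorem stmt_4 (n : ℕ) (hn : 0 < n) (hodd : Odd n) :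
    D (DihedralGroup n) = (∑ d ∈ n.divisors, d) + 2 * n := by
  classical
  haveI : NeZero n := ⟨hn.ne'⟩
  set R : Subgroup (DihedralGroup n) := Subgroup.zpowers (DihedralGroup.r 1) with hRdef
  have hmemR : ∀ i : ZMod n, DihedralGroup.r i ∈ R := by
    intro i
    have h0 : DihedralGroup.r ((i.val : ℕ) : ZMod n) ∈ R := by
      rw [← DihedralGroup.r_one_pow]
      exact pow_mem (Subgroup.mem_zpowers _) _
    simpa [ZMod.natCast_val, ZMod.cast_id] using h0
  have hRle : ∀ x ∈ R, ∃ i, x = DihedralGroup.r i := by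
    intro x hx
    rw [← mem_powers_iff_mem_zpowers] at hx
    obtain ⟨k, hk⟩ := hx
    exact ⟨k, by simp only [← hk]; exact DihedralGroup.r_one_pow k⟩
  have hsrR : ∀ i : ZMod n, DihedralGroup.sr i ∉ R := by
    intro i hi
    obtain ⟨j, hj⟩ := hRle _ hi
    cases hj
  have hcardR : Nat.card R = n := by
    rw [hRdef, Nat.card_zpowers, DihedralGroup.orderOf_r_one]
  have hinv_r : ∀ i : ZMod n, (DihedralGroup.r i)⁻¹ = DihedralGroup.r (-i) := by
    intro i
    rw [eq_comm, eq_inv_iff_mul_eq_one, DihedralGroup.r_mul_r, neg_add_cancel]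
    rfl
  have hinv_sr : ∀ i : ZMod n, (DihedralGroup.sr i)⁻¹ = DihedralGroup.sr i := by
    intro i
    rw [eq_comm, eq_inv_iff_mul_eq_one, DihedralGroup.sr_mul_sr, sub_self]
    rfl
  -- subgroups of R are normal
  have hnormal : ∀ N : Subgroup (DihedralGroup n), N ≤ R → N.Normal := by
    intro N hN
    constructor
    intro x hx g
    obtain ⟨i, rfl⟩ := hRle x (hN hx)
    rcases g with j | j
    · have : DihedralGroup.r j * DihedralGroup.r i * (DihedralGroup.r j)⁻¹
          = DihedralGroup.r i := by
        rw [hinv_r]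
        simp only [DihedralGroup.r_mul_r]
        ring_nf
      rwa [this]
    · have : DihedralGroup.sr j * DihedralGroup.r i * (DihedralGroup.sr j)⁻¹
          = DihedralGroup.r (-i) := by
        rw [hinv_sr]
        simp only [DihedralGroup.sr_mul_r, DihedralGroup.sr_mul_sr]
        ring_nf
      rw [this, ← hinv_r]
      exact inv_mem hx
  -- normal subgroups not contained in R are ⊤
  have htop : ∀ N : Subgroup (DihedralGroup n), N.Normal → ¬N ≤ R → N = ⊤ := by
    intro N hNorm hNR
    obtain ⟨x, hxN, hxR⟩ := SetLike.not_le_iff_exists.mp hNR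
    rcases x with i | i
    · exact absurd (hmemR i) hxR
    · obtain ⟨m, hm⟩ : ∃ m : ZMod n, 2 * m = 1 := by
        obtain ⟨k, hk⟩ := hodd
        refine ⟨((k + 1 : ℕ) : ZMod n), ?_⟩
        have h1 : ((2 * (k + 1) : ℕ) : ZMod n) = ((n + 1 : ℕ) : ZMod n) := by
          congr 1
          omega
        push_cast at h1 ⊢
        rw [ZMod.natCast_self, zero_add] at h1
        exact h1
      have hsr : ∀ k : ZMod n, DihedralGroup.sr k ∈ N := by
        intro k
        have hconj := hNorm.conj_mem _ hxN (DihedralGroup.r (m * (i - k)))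
        have heq : DihedralGroup.r (m * (i - k)) * DihedralGroup.sr i *
            (DihedralGroup.r (m * (i - k)))⁻¹ = DihedralGroup.sr k := by
          rw [hinv_r]
          simp only [DihedralGroup.r_mul_sr, DihedralGroup.sr_mul_r]
          congr 1
          have : i - 2 * (m * (i - k)) = k := by
            rw [show 2 * (m * (i - k)) = 2 * m * (i - k) by ring, hm, one_mul]
            ring
          linear_combination this
        rwa [heq] at hconj
      rw [eq_top_iff']
      intro y
      rcases y with k | k
      · have hmul := mul_mem (hsr 0) (hsr k)
        rw [DihedralGroup.sr_mul_sr, sub_zero] at hmul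
        exact hmul
      · exact hsr k
  -- the set of normal subgroups
  have hset : {N : Subgroup (DihedralGroup n) | N.Normal}
      = insert ⊤ {N : Subgroup (DihedralGroup n) | N ≤ R} := by
    ext N
    simp only [Set.mem_setOf_eq, Set.mem_insert_iff]
    constructor
    · intro h
      by_cases hle : N ≤ R
      · exact Or.inr hle
      · exact Or.inl (htop N h hle)
    · rintro (rfl | h)
      · infer_instance
      · exact hnormal N h
  have hTfin : {N : Subgroup (DihedralGroup n) | N ≤ R}.Finite := Set.toFinite _
  have htopnot : (⊤ : Subgroup (DihedralGroup n)) ∉ {N : Subgroup (DihedralGroup n) | N ≤ R} :=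
    fun h => hsrR 0 (h trivial)
  rw [D, hset, finsum_mem_insert _ htopnot hTfin]
  have hcardtop : Nat.card (⊤ : Subgroup (DihedralGroup n)) = 2 * n := by
    rw [Subgroup.card_top, DihedralGroup.nat_card]
  haveI : IsCyclic R := by
    constructor
    refine ⟨⟨DihedralGroup.r 1, Subgroup.mem_zpowers _⟩, ?_⟩
    rintro ⟨x, hx⟩
    obtain ⟨mm, hmm⟩ := Subgroup.mem_zpowers_iff.mp hx
    exact ⟨mm, Subtype.ext (by simpa using hmm)⟩
  have hsum : ∑ᶠ N ∈ {N : Subgroup (DihedralGroup n) | N ≤ R}, Nat.card N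
      = ∑ d ∈ n.divisors, d := by
    rw [← hTfin.coe_toFinset, finsum_mem_coe_finset]
    refine Finset.sum_bij (fun (N : Subgroup (DihedralGroup n)) (_ : N ∈ hTfin.toFinset) => Nat.card N) ?_ ?_ ?_ ?_
    · intro N hN
      rw [Set.Finite.mem_toFinset, Set.mem_setOf_eq] at hN
      rw [Nat.mem_divisors]
      have hdvd := Subgroup.card_dvd_of_le hN
      rw [hcardR] at hdvd
      exact ⟨hdvd, hn.ne'⟩
    · intro N₁ hN₁ N₂ hN₂ hcard
      rw [Set.Finite.mem_toFinset, Set.mem_setOf_eq] at hN₁ hN₂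
      have e₁ : Nat.card (N₁.subgroupOf R) = Nat.card N₁ :=
        Nat.card_congr (Subgroup.subgroupOfEquivOfLe hN₁).toEquiv
      have e₂ : Nat.card (N₂.subgroupOf R) = Nat.card N₂ :=
        Nat.card_congr (Subgroup.subgroupOfEquivOfLe hN₂).toEquiv
      have := cyclic_card_inj (G := R) (e₁.trans (hcard.trans e₂.symm))
      have h1 := congrArg (fun K : Subgroup R => K.map R.subtype) this
      simpa only [Subgroup.subgroupOf_map_subtype, inf_eq_left.mpr hN₁,
        inf_eq_left.mpr hN₂] using h1
    · intro d hd
      rw [Nat.mem_divisors] at hd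
      obtain ⟨H, hH⟩ := cyclic_exists_subgroup (G := R) (d := d) (by rw [hcardR]; exact hd.1)
      refine ⟨H.map R.subtype, ?_, ?_⟩
      · rw [Set.Finite.mem_toFinset, Set.mem_setOf_eq]
        exact Subgroup.map_subtype_le H
      · rw [← hH]
        exact (Nat.card_congr (Subgroup.equivMapOfInjective H R.subtype
          R.subtype_injective).toEquiv).symm
    · intro N hN
      rfl
  rw [hsum, hcardtop]
  ring
end

section
/- Let n be an even integer with n ≥ 2. Then for the dihedral group E_{2n} of order 2n (DihedralGroup n in Mathlib), D(E_{2n}) > 4n; in particular E_{2n} is not a perfect group. -/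
section aux

variable (n : ℕ)

/-- sign hom -/
def f1 : DihedralGroup n →* Multiplicative (ZMod 2) where
  toFun x := Multiplicative.ofAdd (match x with | .r _ => 0 | .sr _ => 1)
  map_one' := rfl
  map_mul' x y := by
    rcases x with i | i <;> rcases y with j | j <;>
      simp [DihedralGroup.r_mul_r, DihedralGroup.r_mul_sr, DihedralGroup.sr_mul_r,
        DihedralGroup.sr_mul_sr, ← ofAdd_add] <;> rfl

def f2 (h : (2:ℕ) ∣ n) : DihedralGroup n →* Multiplicative (ZMod 2) where
  toFun x := Multiplicative.ofAdd (match x with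
    | .r i => ZMod.castHom h (ZMod 2) i
    | .sr i => ZMod.castHom h (ZMod 2) i)
  map_one' := by rw [DihedralGroup.one_def]; simp
  map_mul' x y := by
    rcases x with i | i <;> rcases y with j | j <;>
      simp [DihedralGroup.r_mul_r, DihedralGroup.r_mul_sr, DihedralGroup.sr_mul_r,
        DihedralGroup.sr_mul_sr, ← ofAdd_add, map_add, map_sub, CharTwo.sub_eq_add,
        add_comm]

lemma f1_surj : Function.Surjective (f1 n) := by
  intro x
  fin_cases x
  · exact ⟨.r 0, rfl⟩
  · exact ⟨.sr 0, rfl⟩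

lemma f2_surj (h : (2:ℕ) ∣ n) : Function.Surjective (f2 n h) := by
  intro x
  fin_cases x
  · exact ⟨.r 0, by
      show Multiplicative.ofAdd ((ZMod.castHom h (ZMod 2)) 0) = _
      rw [map_zero]; decide⟩
  · exact ⟨.r 1, by
      show Multiplicative.ofAdd ((ZMod.castHom h (ZMod 2)) 1) = _
      rw [map_one]; decide⟩

end aux

lemma card_ker {G : Type*} [Group G] [Finite G] (f : G →* Multiplicative (ZMod 2))
    (hf : Function.Surjective f) : 2 * Nat.card f.ker = Nat.card G := by
  have h1 : f.ker.index = Nat.card f.range := Subgroup.index_ker f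
  have h2 : f.range = ⊤ := MonoidHom.range_eq_top.mpr hf
  have h3 : Nat.card (⊤ : Subgroup (Multiplicative (ZMod 2))) = 2 := by
    rw [Subgroup.card_top, Nat.card_eq_fintype_card]; rfl
  have := f.ker.index_mul_card
  rw [h1, h2, h3] at this
  exact this

/-- For even `n ≥ 2`, `D` of the dihedral group of order `2n` exceeds `4n`;
in particular the dihedral group is not a perfect group. -/
theorem stmt_5 (n : ℕ) (hn : 2 ≤ n) (heven : Even n) :
    4 * n < D (DihedralGroup n) ∧
      D (DihedralGroup n) ≠ 2 * Nat.card (DihedralGroup n) := by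
  classical
  haveI : NeZero n := ⟨by omega⟩
  have hdvd : (2:ℕ) ∣ n := heven.two_dvd
  have hcardG : Nat.card (DihedralGroup n) = 2 * n := by
    rw [Nat.card_eq_fintype_card, DihedralGroup.card]
  set N1 := (f1 n).ker with hN1def
  set N2 := (f2 n hdvd).ker with hN2def
  have hN1 : Nat.card N1 = n := by
    have := card_ker (f1 n) (f1_surj n); rw [hcardG] at this; rw [hN1def]; omega
  have hN2 : Nat.card N2 = n := by
    have := card_ker (f2 n hdvd) (f2_surj n hdvd); rw [hcardG] at this; rw [hN2def]; omega
  have hcb : Nat.card (⊥ : Subgroup (DihedralGroup n)) = 1 := Subgroup.card_bot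
  have hct : Nat.card (⊤ : Subgroup (DihedralGroup n)) = 2 * n := by
    rw [Subgroup.card_top, hcardG]
  -- distinctness
  have hb1 : (⊥ : Subgroup (DihedralGroup n)) ≠ N1 := fun h => by
    rw [← h, hcb] at hN1; omega
  have hb2 : (⊥ : Subgroup (DihedralGroup n)) ≠ N2 := fun h => by
    rw [← h, hcb] at hN2; omega
  have hbt : (⊥ : Subgroup (DihedralGroup n)) ≠ ⊤ := fun h => by
    rw [← h, hcb] at hct; omega
  have ht1 : N1 ≠ ⊤ := fun h => by rw [h, hct] at hN1; omega
  have ht2 : N2 ≠ ⊤ := fun h => by rw [h, hct] at hN2; omega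
  have h12 : N1 ≠ N2 := by
    intro h
    have hmem : DihedralGroup.sr 0 ∈ N2 := by
      show Multiplicative.ofAdd ((ZMod.castHom hdvd (ZMod 2)) 0) = 1
      rw [map_zero]; rfl
    rw [← h] at hmem
    have : Multiplicative.ofAdd (1 : ZMod 2) = 1 := hmem
    exact absurd this (by decide)
  -- the finsum
  have hfin : {N : Subgroup (DihedralGroup n) | N.Normal}.Finite := Set.toFinite _
  have hD : D (DihedralGroup n) = ∑ N ∈ hfin.toFinset, Nat.card N := by
    unfold D
    exact finsum_mem_eq_finite_toFinset_sum _ hfin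
  have hsub : ({⊥, N1, N2, ⊤} : Finset (Subgroup (DihedralGroup n))) ⊆ hfin.toFinset := by
    intro N hN
    simp only [Finset.mem_insert, Finset.mem_singleton] at hN
    rw [Set.Finite.mem_toFinset]
    rcases hN with rfl | rfl | rfl | rfl
    · show Subgroup.Normal _; infer_instance
    · exact (f1 n).normal_ker
    · exact (f2 n hdvd).normal_ker
    · show Subgroup.Normal _; infer_instance
  have hsum : ∑ N ∈ ({⊥, N1, N2, ⊤} : Finset (Subgroup (DihedralGroup n))), Nat.card N
      = 4 * n + 1 := by
    rw [Finset.sum_insert (by simp [hb1, hb2, hbt]),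
        Finset.sum_insert (by simp [h12, ht1]),
        Finset.sum_insert (by simp [ht2]),
        Finset.sum_singleton, hcb, hN1, hN2, hct]
    ring
  have hle : 4 * n + 1 ≤ D (DihedralGroup n) := by
    rw [hD, ← hsum]
    exact Finset.sum_le_sum_of_subset hsub
  refine ⟨by omega, ?_⟩
  rw [hcardG]; omega
end

section
/- For a positive integer n, the dihedral group E_{2n} of order 2n (DihedralGroup n in Mathlib) is a perfect group if and only if n is an odd perfect number. -/
namespace StmtAux
open DihedralGroup Subgroup

variable {n : ℕ}

lemma inv_r (i : ZMod n) : (r i)⁻¹ = r (-i) :=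
  inv_eq_of_mul_eq_one_right (by rw [r_mul_r, add_neg_cancel]; rfl)

lemma inv_sr (i : ZMod n) : (sr i)⁻¹ = sr i :=
  inv_eq_of_mul_eq_one_right (sr_mul_self i)

lemma r_pow (i : ZMod n) (k : ℕ) : (r i) ^ k = r (k • i) := by
  induction k with
  | zero => rw [pow_zero, zero_nsmul]; rfl
  | succ k ih => rw [pow_succ, ih, r_mul_r, succ_nsmul]

/-- The rotation subgroup of the dihedral group. -/
def rsub (n : ℕ) : Subgroup (DihedralGroup n) := Subgroup.zpowers (r 1)

lemma r_mem_rsub [NeZero n] (i : ZMod n) : r i ∈ rsub n := by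
  rw [rsub, ← mem_powers_iff_mem_zpowers]
  exact ⟨i.val, by show r 1 ^ i.val = r i; rw [r_one_pow, ZMod.natCast_val, ZMod.cast_id]⟩

lemma mem_rsub_iff [NeZero n] {x : DihedralGroup n} : x ∈ rsub n ↔ ∃ i, x = r i := by
  constructor
  · intro hx
    rw [rsub, ← mem_powers_iff_mem_zpowers] at hx
    obtain ⟨k, hk⟩ := hx
    refine ⟨(k : ZMod n), ?_⟩
    have : r 1 ^ k = r (k : ZMod n) := r_one_pow k
    rw [← hk]
    beta_reduce
    exact this
  · rintro ⟨i, rfl⟩; exact r_mem_rsub i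

lemma sr_not_mem_rsub [NeZero n] (i : ZMod n) : sr i ∉ rsub n := by
  rw [mem_rsub_iff]
  rintro ⟨j, h⟩
  exact absurd h (by simp)

lemma card_rsub [NeZero n] : Nat.card (rsub n) = n := by
  rw [rsub, Nat.card_zpowers, orderOf_r_one]

lemma normal_of_le_rsub [NeZero n] {N : Subgroup (DihedralGroup n)} (h : N ≤ rsub n) :
    N.Normal := by
  constructor
  intro x hx g
  obtain ⟨i, rfl⟩ := mem_rsub_iff.mp (h hx)
  cases g with
  | r j =>
    have : r j * r i * (r j)⁻¹ = r i := by
      rw [inv_r, r_mul_r, r_mul_r]; ring_nf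
    rwa [this]
  | sr a =>
    have : sr a * r i * (sr a)⁻¹ = (r i)⁻¹ := by
      rw [inv_sr, sr_mul_r, sr_mul_sr, inv_r]; ring_nf
    rw [this]
    exact N.inv_mem hx

lemma eq_top_of_sr_mem (ho : Odd n) {N : Subgroup (DihedralGroup n)} (hN : N.Normal)
    {i : ZMod n} (hi : sr i ∈ N) : N = ⊤ := by
  set h : ZMod n := (((n + 1) / 2 : ℕ) : ZMod n) with hh
  have h2 : (2 : ZMod n) * h = 1 := by
    have he : (2 * ((n + 1) / 2) : ℕ) = n + 1 := Nat.two_mul_div_two_of_even (by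
      simpa using ho.add_one)
    calc (2 : ZMod n) * h = ((2 * ((n + 1) / 2) : ℕ) : ZMod n) := by rw [hh]; push_cast; ring
    _ = ((n + 1 : ℕ) : ZMod n) := by rw [he]
    _ = 1 := by push_cast; simp [ZMod.natCast_self]
  have hsr : ∀ k : ZMod n, sr k ∈ N := by
    intro k
    have hc := hN.conj_mem _ hi (r (h * (i - k)))
    have heq : r (h * (i - k)) * sr i * (r (h * (i - k)))⁻¹ = sr k := by
      rw [inv_r, r_mul_sr, sr_mul_r]
      congr 1
      have h3 : (2 : ZMod n) * (h * (i - k)) = i - k := by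
        rw [← mul_assoc, h2, one_mul]
      linear_combination -h3
    rwa [heq] at hc
  have hr : ∀ k : ZMod n, r k ∈ N := by
    intro k
    have := N.mul_mem (hsr 0) (hsr k)
    rwa [sr_mul_sr, sub_zero] at this
  rw [eq_top_iff]
  rintro (j | j) _
  · exact hr j
  · exact hsr j

lemma normal_iff [NeZero n] (ho : Odd n) {N : Subgroup (DihedralGroup n)} :
    N.Normal ↔ N ≤ rsub n ∨ N = ⊤ := by
  constructor
  · intro hN
    by_cases h : N ≤ rsub n
    · exact Or.inl h
    · right
      rw [SetLike.le_def] at h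
      push_neg at h
      obtain ⟨x, hxN, hxr⟩ := h
      cases x with
      | r i => exact absurd (r_mem_rsub i) hxr
      | sr i => exact eq_top_of_sr_mem ho hN hxN
  · rintro (h | rfl)
    · exact normal_of_le_rsub h
    · infer_instance


lemma le_rsub_coe_eq [NeZero n] {N : Subgroup (DihedralGroup n)} (h : N ≤ rsub n) :
    (N : Set (DihedralGroup n)) = {x | x ∈ rsub n ∧ x ^ (Nat.card N) = 1} := by
  set d := Nat.card N with hd
  have hd0 : 0 < d := Nat.card_pos
  have hsub : (N : Set (DihedralGroup n)) ⊆ {x | x ∈ rsub n ∧ x ^ d = 1} := by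
    intro x hx
    refine ⟨h hx, ?_⟩
    have : ((⟨x, hx⟩ : N) : DihedralGroup n) ^ d = ((1 : N) : DihedralGroup n) := by
      norm_cast
      exact pow_card_eq_one'
    simpa using this
  refine Set.eq_of_subset_of_ncard_le hsub ?_ (Set.toFinite _)
  have hN2 : (N : Set (DihedralGroup n)).ncard = d := by
    rw [← Nat.card_coe_set_eq]; rfl
  rw [hN2]
  have himg : {x : DihedralGroup n | x ∈ rsub n ∧ x ^ d = 1} ⊆ r '' {i : ZMod n | d • i = 0} := by
    rintro x ⟨hxr, hx1⟩
    obtain ⟨i, rfl⟩ := mem_rsub_iff.mp hxr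
    refine ⟨i, ?_, rfl⟩
    rw [r_pow] at hx1
    rw [one_def] at hx1
    exact DihedralGroup.r.inj hx1
  refine le_trans (Set.ncard_le_ncard himg (Set.toFinite _)) ?_
  refine le_trans (Set.ncard_image_le (Set.toFinite _)) ?_
  classical
  have := IsAddCyclic.card_nsmul_eq_zero_le (α := ZMod n) (n := d) hd0
  rw [Set.ncard_eq_toFinset_card']
  refine le_trans (le_of_eq ?_) this
  congr 1
  ext i
  simp

lemma eq_of_le_rsub_card_eq [NeZero n] {N₁ N₂ : Subgroup (DihedralGroup n)}
    (h₁ : N₁ ≤ rsub n) (h₂ : N₂ ≤ rsub n) (h : Nat.card N₁ = Nat.card N₂) : N₁ = N₂ := by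
  apply SetLike.coe_injective
  rw [le_rsub_coe_eq h₁, le_rsub_coe_eq h₂, h]

lemma exists_card [NeZero n] {d : ℕ} (hd : d ∣ n) : ∃ N ≤ rsub n, Nat.card N = d := by
  refine ⟨Subgroup.zpowers ((r 1 : DihedralGroup n) ^ (n / d)), ?_, ?_⟩
  · rw [Subgroup.zpowers_le]
    exact (rsub n).pow_mem (r_mem_rsub 1) _
  · have hd0 : d ≠ 0 := by rintro rfl; simp at hd; exact NeZero.ne n hd
    rw [Nat.card_zpowers, orderOf_pow, orderOf_r_one,
      Nat.gcd_eq_right (Nat.div_dvd_of_dvd hd), Nat.div_div_self hd (NeZero.ne n)]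

lemma sum_rsub [NeZero n] :
    ∑ᶠ N ∈ {N : Subgroup (DihedralGroup n) | N ≤ rsub n}, Nat.card N = ∑ d ∈ n.divisors, d := by
  have hfin : ({N : Subgroup (DihedralGroup n) | N ≤ rsub n} ∩
      Function.support fun N : Subgroup (DihedralGroup n) => Nat.card N).Finite :=
    Set.toFinite _
  rw [finsum_mem_eq_sum _ hfin]
  refine Finset.sum_bij (fun N _ => Nat.card N) ?_ ?_ ?_ ?_
  · intro N hN
    beta_reduce
    rw [Set.Finite.mem_toFinset] at hN
    rw [Nat.mem_divisors]
    refine ⟨?_, NeZero.ne n⟩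
    have := Subgroup.card_dvd_of_le hN.1
    rwa [card_rsub] at this
  · intro N₁ h₁ N₂ h₂ hc
    rw [Set.Finite.mem_toFinset] at h₁ h₂
    exact eq_of_le_rsub_card_eq h₁.1 h₂.1 hc
  · intro d hd
    rw [Nat.mem_divisors] at hd
    obtain ⟨N, hle, hcard⟩ := exists_card hd.1
    refine ⟨N, ?_, ?_⟩
    · rw [Set.Finite.mem_toFinset]
      refine ⟨hle, ?_⟩
      have : Nat.card N ≠ 0 := Nat.card_pos.ne'
      simpa [Function.support] using this
    · beta_reduce
      exact hcard
  · intros; rfl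


/-! ### Even case -/

/-- Projection to `DihedralGroup 2` when `2 ∣ n`. -/
def phi (h : 2 ∣ n) : DihedralGroup n →* DihedralGroup 2 where
  toFun := fun x => match x with
    | DihedralGroup.r i => DihedralGroup.r (ZMod.castHom h (ZMod 2) i)
    | DihedralGroup.sr i => DihedralGroup.sr (ZMod.castHom h (ZMod 2) i)
  map_one' := by
    show DihedralGroup.r (ZMod.castHom h (ZMod 2) 0) = 1
    rw [map_zero]; rfl
  map_mul' := by
    rintro (i | i) (j | j) <;>
      simp only [r_mul_r, r_mul_sr, sr_mul_r, sr_mul_sr, map_add, map_sub]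

lemma phi_surj (h : 2 ∣ n) : Function.Surjective (phi h) := by
  rintro (i | i)
  · refine ⟨DihedralGroup.r ((i.val : ZMod n)), ?_⟩
    show DihedralGroup.r (ZMod.castHom h (ZMod 2) (i.val : ZMod n)) = DihedralGroup.r i
    rw [map_natCast, ZMod.natCast_val, ZMod.cast_id]
  · refine ⟨DihedralGroup.sr ((i.val : ZMod n)), ?_⟩
    show DihedralGroup.sr (ZMod.castHom h (ZMod 2) (i.val : ZMod n)) = DihedralGroup.sr i
    rw [map_natCast, ZMod.natCast_val, ZMod.cast_id]

def K0 : Subgroup (DihedralGroup 2) where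
  carrier := {x | x = 1 ∨ x = DihedralGroup.sr 0}
  one_mem' := Or.inl rfl
  mul_mem' := by rintro a b (rfl | rfl) (rfl | rfl) <;> decide
  inv_mem' := by rintro a (rfl | rfl) <;> decide

def K1 : Subgroup (DihedralGroup 2) where
  carrier := {x | x = 1 ∨ x = DihedralGroup.sr 1}
  one_mem' := Or.inl rfl
  mul_mem' := by rintro a b (rfl | rfl) (rfl | rfl) <;> decide
  inv_mem' := by rintro a (rfl | rfl) <;> decide

lemma dihedral2_comm : ∀ x y : DihedralGroup 2, x * y = y * x := by decide

lemma normal_of_d2 (K : Subgroup (DihedralGroup 2)) : K.Normal := by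
  constructor
  intro x hx g
  rw [dihedral2_comm g x, mul_assoc]
  simpa using hx

lemma card_K0 : Nat.card K0 = 2 := by
  have h : Nat.card K0 = (K0 : Set (DihedralGroup 2)).ncard := by
    rw [← Nat.card_coe_set_eq]; rfl
  rw [h, show (K0 : Set (DihedralGroup 2)) = {1, DihedralGroup.sr 0} from rfl,
    Set.ncard_pair (by decide)]

lemma card_K1 : Nat.card K1 = 2 := by
  have h : Nat.card K1 = (K1 : Set (DihedralGroup 2)).ncard := by
    rw [← Nat.card_coe_set_eq]; rfl
  rw [h, show (K1 : Set (DihedralGroup 2)) = {1, DihedralGroup.sr 1} from rfl,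
    Set.ncard_pair (by decide)]

lemma card_comap (h : 2 ∣ n) [NeZero n] {K : Subgroup (DihedralGroup 2)}
    (hK : Nat.card K = 2) : Nat.card (Subgroup.comap (phi h) K) = n := by
  have h1 : (Subgroup.comap (phi h) K).index = K.index :=
    Subgroup.index_comap_of_surjective _ (phi_surj h)
  have h2 := Subgroup.card_mul_index K
  rw [hK, DihedralGroup.nat_card] at h2
  have hidx : K.index = 2 := by omega
  have h3 := Subgroup.card_mul_index (Subgroup.comap (phi h) K)
  rw [h1, hidx, DihedralGroup.nat_card] at h3
  omega

lemma even_bound [NeZero n] (he : 2 ∣ n) :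
    5 * n + 1 ≤ ∑ᶠ N ∈ {N : Subgroup (DihedralGroup n) | N.Normal}, Nat.card N := by
  classical
  have hn2 : 2 ≤ n := Nat.le_of_dvd (Nat.pos_of_ne_zero (NeZero.ne n)) he
  set H0 : Subgroup (DihedralGroup n) := Subgroup.comap (phi he) K0 with hH0
  set H1 : Subgroup (DihedralGroup n) := Subgroup.comap (phi he) K1 with hH1
  have cH0 : Nat.card H0 = n := card_comap he card_K0
  have cH1 : Nat.card H1 = n := card_comap he card_K1
  have cR : Nat.card (rsub n) = n := card_rsub
  have cT : Nat.card (⊤ : Subgroup (DihedralGroup n)) = 2 * n := by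
    rw [Subgroup.card_top, DihedralGroup.nat_card]
  have cB : Nat.card (⊥ : Subgroup (DihedralGroup n)) = 1 := Subgroup.card_bot
  -- membership facts
  have m00 : DihedralGroup.sr (0 : ZMod n) ∈ H0 := by
    show phi he (DihedralGroup.sr 0) ∈ K0
    show DihedralGroup.sr (ZMod.castHom he (ZMod 2) 0) ∈ K0
    rw [map_zero]
    exact Or.inr rfl
  have m11 : DihedralGroup.sr (1 : ZMod n) ∈ H1 := by
    show phi he (DihedralGroup.sr 1) ∈ K1
    show DihedralGroup.sr (ZMod.castHom he (ZMod 2) 1) ∈ K1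
    rw [map_one]
    exact Or.inr rfl
  have m01 : DihedralGroup.sr (0 : ZMod n) ∉ H1 := by
    show phi he (DihedralGroup.sr 0) ∈ K1 → False
    show DihedralGroup.sr (ZMod.castHom he (ZMod 2) 0) ∈ K1 → False
    rw [map_zero]
    rintro (h | h) <;> exact absurd h (by decide)
  -- distinctness
  have dBT : (⊥ : Subgroup (DihedralGroup n)) ≠ ⊤ := by
    intro h; rw [h] at cB; omega
  have dBR : (⊥ : Subgroup (DihedralGroup n)) ≠ rsub n := by
    intro h; rw [h] at cB; omega
  have dB0 : (⊥ : Subgroup (DihedralGroup n)) ≠ H0 := by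
    intro h; rw [h] at cB; omega
  have dB1 : (⊥ : Subgroup (DihedralGroup n)) ≠ H1 := by
    intro h; rw [h] at cB; omega
  have dRT : rsub n ≠ ⊤ := by
    intro h; rw [h] at cR; omega
  have d0T : H0 ≠ ⊤ := by
    intro h; rw [h] at cH0; omega
  have d1T : H1 ≠ ⊤ := by
    intro h; rw [h] at cH1; omega
  have dR0 : rsub n ≠ H0 := by
    intro h
    exact sr_not_mem_rsub 0 (h ▸ m00)
  have dR1 : rsub n ≠ H1 := by
    intro h
    exact sr_not_mem_rsub 1 (h ▸ m11)
  have d01 : H0 ≠ H1 := by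
    intro h
    exact m01 (h ▸ m00)
  -- normality
  have nB : (⊥ : Subgroup (DihedralGroup n)).Normal := inferInstance
  have nT : (⊤ : Subgroup (DihedralGroup n)).Normal := inferInstance
  have nR : (rsub n).Normal := normal_of_le_rsub le_rfl
  have n0 : H0.Normal := (normal_of_d2 K0).comap (phi he)
  have n1 : H1.Normal := (normal_of_d2 K1).comap (phi he)
  -- the sum
  have hfin : ({N : Subgroup (DihedralGroup n) | N.Normal} ∩
      Function.support fun N : Subgroup (DihedralGroup n) => Nat.card N).Finite :=
    Set.toFinite _
  rw [finsum_mem_eq_sum _ hfin]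
  have hsupp : ∀ N : Subgroup (DihedralGroup n), Nat.card N ≠ 0 := fun N => Nat.card_pos.ne'
  have hsubset : ({⊥, rsub n, H0, H1, ⊤} : Finset (Subgroup (DihedralGroup n))) ⊆
      hfin.toFinset := by
    intro N hN
    rw [Set.Finite.mem_toFinset]
    simp only [Finset.mem_insert, Finset.mem_singleton] at hN
    rcases hN with rfl | rfl | rfl | rfl | rfl <;> exact ⟨by assumption, hsupp _⟩
  refine le_trans ?_ (Finset.sum_le_sum_of_subset hsubset)
  rw [show ({⊥, rsub n, H0, H1, ⊤} : Finset (Subgroup (DihedralGroup n)))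
      = insert ⊥ (insert (rsub n) (insert H0 (insert H1 {⊤}))) from rfl]
  rw [Finset.sum_insert (by simp [dBR, dB0, dB1, dBT]),
    Finset.sum_insert (by simp [dR0, dR1, dRT]),
    Finset.sum_insert (by simp [d01, d0T]),
    Finset.sum_insert (by simp [d1T]),
    Finset.sum_singleton]
  rw [cB, cR, cH0, cH1, cT]
  omega

end StmtAux


/-- The dihedral group of order `2n` is a perfect group iff `n` is an odd perfect number. -/
theorem stmt_6 (n : ℕ) (hn : 0 < n) :
    D (DihedralGroup n) = 2 * Nat.card (DihedralGroup n) ↔ Odd n ∧ Nat.Perfect n := by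
  have hnz : NeZero n := ⟨hn.ne'⟩
  rw [DihedralGroup.nat_card]
  rcases Nat.even_or_odd n with he | ho
  · -- even case: both sides false
    have hb := StmtAux.even_bound (n := n) he.two_dvd
    constructor
    · intro hD
      unfold D at hD
      omega
    · rintro ⟨h1, -⟩
      exact absurd he (Nat.not_even_iff_odd.mpr h1)
  · -- odd case
    have hset : {N : Subgroup (DihedralGroup n) | N.Normal}
        = {N | N ≤ StmtAux.rsub n} ∪ {⊤} := by
      ext N
      simp only [Set.mem_setOf_eq, Set.mem_union, Set.mem_singleton_iff]
      exact StmtAux.normal_iff ho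
    have hdisj : Disjoint {N : Subgroup (DihedralGroup n) | N ≤ StmtAux.rsub n}
        ({⊤} : Set (Subgroup (DihedralGroup n))) := by
      rw [Set.disjoint_singleton_right]
      intro h
      exact StmtAux.sr_not_mem_rsub (0 : ZMod n) (h (Subgroup.mem_top _))
    have hD : D (DihedralGroup n) = (∑ d ∈ n.divisors, d) + 2 * n := by
      unfold D
      rw [hset, finsum_mem_union hdisj (Set.toFinite _) (Set.toFinite _),
        StmtAux.sum_rsub, finsum_mem_singleton, Subgroup.card_top, DihedralGroup.nat_card]
    rw [hD, Nat.perfect_iff_sum_divisors_eq_two_mul hn]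
    constructor
    · intro h
      exact ⟨ho, by omega⟩
    · rintro ⟨-, h⟩
      omega
end

section
/- D is multiplicative: if G₁ and G₂ are finite groups whose orders are coprime, then D(G₁ × G₂) = D(G₁) · D(G₂). -/
section aux

variable {G₁ G₂ : Type*} [Group G₁] [Group G₂] [Finite G₁] [Finite G₂]

lemma key_decomp (hco : Nat.Coprime (Nat.card G₁) (Nat.card G₂))
    (N : Subgroup (G₁ × G₂)) :
    N = (N.map (MonoidHom.fst G₁ G₂)).prod (N.map (MonoidHom.snd G₁ G₂)) := by
  obtain ⟨m, hm1, hm2⟩ := Nat.chineseRemainder hco 1 0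
  have hG1 : ∀ a : G₁, a ^ m = a := by
    intro a
    have : m ≡ 1 [MOD orderOf a] := hm1.of_dvd (orderOf_dvd_natCard a)
    simpa using (pow_eq_pow_iff_modEq (x := a) (n := m) (m := 1)).2 this
  have hG2 : ∀ b : G₂, b ^ m = 1 := by
    intro b
    have : m ≡ 0 [MOD orderOf b] := hm2.of_dvd (orderOf_dvd_natCard b)
    simpa using (pow_eq_pow_iff_modEq (x := b) (n := m) (m := 0)).2 this
  have hfst : ∀ x : G₁ × G₂, x ∈ N → (x.1, (1 : G₂)) ∈ N := by
    intro x hx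
    have hxm : x ^ m = (x.1, 1) := Prod.ext (hG1 x.1) (hG2 x.2)
    have := N.pow_mem hx m
    rwa [hxm] at this
  -- for snd, use exponent m' ≡ 0 mod card G₁, ≡ 1 mod card G₂
  obtain ⟨k, hk1, hk2⟩ := Nat.chineseRemainder hco 0 1
  have hsnd : ∀ x : G₁ × G₂, x ∈ N → ((1 : G₁), x.2) ∈ N := by
    intro x hx
    have hx1 : x.1 ^ k = 1 := by
      have : k ≡ 0 [MOD orderOf x.1] := hk1.of_dvd (orderOf_dvd_natCard x.1)
      simpa using (pow_eq_pow_iff_modEq (x := x.1) (n := k) (m := 0)).2 this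
    have hx2 : x.2 ^ k = x.2 := by
      have : k ≡ 1 [MOD orderOf x.2] := hk2.of_dvd (orderOf_dvd_natCard x.2)
      simpa using (pow_eq_pow_iff_modEq (x := x.2) (n := k) (m := 1)).2 this
    have hxk : x ^ k = (1, x.2) := Prod.ext hx1 hx2
    have := N.pow_mem hx k
    rwa [hxk] at this
  ext ⟨a, b⟩
  simp only [Subgroup.mem_prod, Subgroup.mem_map]
  constructor
  · intro h
    exact ⟨⟨(a, b), h, rfl⟩, ⟨(a, b), h, rfl⟩⟩
  · rintro ⟨⟨x, hx, rfl⟩, ⟨y, hy, rfl⟩⟩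
    have h1 : (x.1, (1 : G₂)) ∈ N := hfst x hx
    have h2 : ((1 : G₁), y.2) ∈ N := hsnd y hy
    simpa using N.mul_mem h1 h2

lemma map_fst_prod (A : Subgroup G₁) (B : Subgroup G₂) :
    (A.prod B).map (MonoidHom.fst G₁ G₂) = A := by
  ext a
  simp only [Subgroup.mem_map, Subgroup.mem_prod]
  exact ⟨fun ⟨x, ⟨h1, _⟩, hx⟩ => hx ▸ h1, fun h => ⟨(a, 1), ⟨h, B.one_mem⟩, rfl⟩⟩

lemma map_snd_prod (A : Subgroup G₁) (B : Subgroup G₂) :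
    (A.prod B).map (MonoidHom.snd G₁ G₂) = B := by
  ext b
  simp only [Subgroup.mem_map, Subgroup.mem_prod]
  exact ⟨fun ⟨x, ⟨_, h2⟩, hx⟩ => hx ▸ h2, fun h => ⟨(1, b), ⟨A.one_mem, h⟩, rfl⟩⟩

end aux

/-- `D` is multiplicative: if `G₁` and `G₂` have coprime orders, then
`D (G₁ × G₂) = D G₁ * D G₂`. -/
theorem stmt_8 (G₁ G₂ : Type*) [Group G₁] [Group G₂] [Finite G₁] [Finite G₂]
    (hco : Nat.Coprime (Nat.card G₁) (Nat.card G₂)) :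
    D (G₁ × G₂) = D G₁ * D G₂ := by
  classical
  have h1 : ({N : Subgroup G₁ | N.Normal}).Finite := Set.toFinite _
  have h2 : ({N : Subgroup G₂ | N.Normal}).Finite := Set.toFinite _
  have h12 : ({N : Subgroup (G₁ × G₂) | N.Normal}).Finite := Set.toFinite _
  rw [D, D, D, finsum_mem_eq_finite_toFinset_sum _ h1,
    finsum_mem_eq_finite_toFinset_sum _ h2, finsum_mem_eq_finite_toFinset_sum _ h12,
    Finset.sum_mul_sum]
  rw [← Finset.sum_product']
  refine Finset.sum_nbij' (fun N => (N.map (MonoidHom.fst G₁ G₂), N.map (MonoidHom.snd G₁ G₂)))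
    (fun p => p.1.prod p.2) ?_ ?_ ?_ ?_ ?_
  · intro N hN
    simp only [Set.Finite.mem_toFinset, Set.mem_setOf_eq] at hN ⊢
    rw [Finset.mem_product]
    constructor
    · simp only [Set.Finite.mem_toFinset, Set.mem_setOf_eq]
      exact hN.map _ (by exact fun x => ⟨(x, 1), rfl⟩)
    · simp only [Set.Finite.mem_toFinset, Set.mem_setOf_eq]
      exact hN.map _ (by exact fun x => ⟨(1, x), rfl⟩)
  · intro p hp
    rw [Finset.mem_product] at hp
    simp only [Set.Finite.mem_toFinset, Set.mem_setOf_eq] at hp ⊢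
    have := hp.1; have := hp.2
    exact Subgroup.prod_normal p.1 p.2
  · intro N hN
    exact (key_decomp hco N).symm
  · intro p hp
    exact Prod.ext (map_fst_prod p.1 p.2) (map_snd_prod p.1 p.2)
  · intro N hN
    rw [key_decomp hco N]
    simp only [map_fst_prod, map_snd_prod]
    rw [Nat.card_congr (Subgroup.prodEquiv _ _).toEquiv, Nat.card_prod]
end

section
/- The group S₃ × C₅ (the direct product of the symmetric group on 3 letters and the cyclic group of order 5), of order 30, is a perfect group: D(S₃ × C₅) = 60 = 2·|S₃ × C₅|. -/
open Equiv Subgroup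

private def isSubF (s : Finset (Perm (Fin 3))) : Prop :=
  (1 : Perm (Fin 3)) ∈ s ∧ ∀ a ∈ s, ∀ b ∈ s, a * b⁻¹ ∈ s

private def isNormF (s : Finset (Perm (Fin 3))) : Prop :=
  ∀ a ∈ s, ∀ g : Perm (Fin 3), g * a * g⁻¹ ∈ s

private instance : DecidablePred isSubF := fun _ => by unfold isSubF; infer_instance
private instance : DecidablePred isNormF := fun _ => by unfold isNormF; infer_instance

private def A3F : Finset (Perm (Fin 3)) := Finset.univ.filter (fun x => Perm.sign x = 1)

set_option maxRecDepth 10000 in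
private lemma classifyF : ∀ s : Finset (Perm (Fin 3)), isSubF s → isNormF s →
    s = {1} ∨ s = A3F ∨ s = Finset.univ := by decide

private lemma classifyS3 (N : Subgroup (Perm (Fin 3))) (hN : N.Normal) :
    N = ⊥ ∨ N = alternatingGroup (Fin 3) ∨ N = ⊤ := by
  classical
  set s : Finset (Perm (Fin 3)) := Finset.univ.filter (· ∈ N) with hs
  have hmem : ∀ x, x ∈ s ↔ x ∈ N := by intro x; simp [hs]
  have h1 : isSubF s := ⟨(hmem 1).2 N.one_mem,
    fun a ha b hb => (hmem _).2 (N.mul_mem ((hmem a).1 ha) (N.inv_mem ((hmem b).1 hb)))⟩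
  have h2 : isNormF s := fun a ha g => (hmem _).2 (hN.conj_mem a ((hmem a).1 ha) g)
  rcases classifyF s h1 h2 with h | h | h
  · left; ext x
    simp [← hmem x, h]
  · right; left; ext x
    rw [← hmem x, h]
    simp [A3F, Perm.mem_alternatingGroup]
  · right; right; ext x
    rw [← hmem x, h]; simp

private lemma card_A3 : Nat.card (alternatingGroup (Fin 3)) = 3 := by
  rw [Nat.card_eq_fintype_card]; decide

section Main

abbrev GG := Perm (Fin 3) × Multiplicative (ZMod 5)

private lemma prod_decomp (N : Subgroup GG) :
    N = (N.map (MonoidHom.fst _ _)).prod (N.map (MonoidHom.snd _ _)) := by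
  ext ⟨a, b⟩
  constructor
  · intro h
    exact ⟨⟨(a, b), h, rfl⟩, ⟨(a, b), h, rfl⟩⟩
  · rintro ⟨⟨⟨a', b1⟩, h1, rfl⟩, ⟨⟨a1, b'⟩, h2, rfl⟩⟩
    have e1 : ((a', b1) : GG) ^ 25 = (a', 1) := by
      have : a' ^ 25 = a' := by
        have h6 : a' ^ 6 = 1 := by
          have h := @pow_card_eq_one (Perm (Fin 3)) _ _ a'
          rwa [show Fintype.card (Perm (Fin 3)) = 6 by decide] at h
        calc a' ^ 25 = (a' ^ 6) ^ 4 * a' := by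
              rw [show 25 = 6 * 4 + 1 from rfl, pow_succ, pow_mul]
        _ = a' := by rw [h6]; simp
      have hb : b1 ^ 25 = 1 := by
        have h5 : b1 ^ 5 = 1 := by
          have h := @pow_card_eq_one (Multiplicative (ZMod 5)) _ _ b1
          rwa [show Fintype.card (Multiplicative (ZMod 5)) = 5 by decide] at h
        calc b1 ^ 25 = (b1 ^ 5) ^ 5 := by rw [show 25 = 5 * 5 from rfl, pow_mul]
        _ = 1 := by rw [h5]; simp
      simp [Prod.pow_fst, Prod.pow_snd, Prod.ext_iff, this, hb]
    have e2 : ((a1, b') : GG) ^ 6 = (1, b') := by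
      have ha : a1 ^ 6 = 1 := by
        have h := @pow_card_eq_one (Perm (Fin 3)) _ _ a1
        rwa [show Fintype.card (Perm (Fin 3)) = 6 by decide] at h
      have hb : b' ^ 6 = b' := by
        have h5 : b' ^ 5 = 1 := by
          have h := @pow_card_eq_one (Multiplicative (ZMod 5)) _ _ b'
          rwa [show Fintype.card (Multiplicative (ZMod 5)) = 5 by decide] at h
        calc b' ^ 6 = b' ^ 5 * b' := by rw [show 6 = 5 + 1 from rfl, pow_succ]
        _ = b' := by rw [h5]; simp
      simp [Prod.ext_iff, ha, hb]
    have m1 : ((a', 1) : GG) ∈ N := e1 ▸ N.pow_mem h1 25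
    have m2 : ((1, b') : GG) ∈ N := e2 ▸ N.pow_mem h2 6
    have := N.mul_mem m1 m2
    simpa using this

end Main

/-- The group `S₃ × C₅`, of order 30, is a perfect group: `D(S₃ × C₅) = 60 = 2·30`. -/
theorem stmt_9 :
    D (Equiv.Perm (Fin 3) × Multiplicative (ZMod 5)) = 60 ∧
      Nat.card (Equiv.Perm (Fin 3) × Multiplicative (ZMod 5)) = 30 := by
  classical
  have hcard : Nat.card GG = 30 := by
    rw [Nat.card_eq_fintype_card]; decide
  refine ⟨?_, hcard⟩
  have hC : ∀ M : Subgroup (Multiplicative (ZMod 5)), M = ⊥ ∨ M = ⊤ := by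
    intro M
    have : Fact (Nat.card (Multiplicative (ZMod 5))).Prime := by
      constructor
      rw [Nat.card_eq_fintype_card]
      norm_num
    exact M.eq_bot_or_eq_top_of_prime_card
  set A := alternatingGroup (Fin 3)
  set L : Finset (Subgroup GG) :=
    {(⊥ : Subgroup (Perm (Fin 3))).prod ⊥, A.prod ⊥, (⊤ : Subgroup (Perm (Fin 3))).prod ⊥,
     (⊥ : Subgroup (Perm (Fin 3))).prod ⊤, A.prod ⊤, (⊤ : Subgroup (Perm (Fin 3))).prod ⊤} with hL
  have hset : {N : Subgroup GG | N.Normal} = ↑L := by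
    ext N
    simp only [Set.mem_setOf_eq, hL, Finset.coe_insert, Set.mem_insert_iff,
      Finset.coe_singleton, Set.mem_singleton_iff]
    constructor
    · intro hN
      have hd := prod_decomp N
      have hfst : (N.map (MonoidHom.fst _ _)) = ⊥ ∨ (N.map (MonoidHom.fst _ _)) = A ∨
          (N.map (MonoidHom.fst _ _)) = ⊤ :=
        classifyS3 _ (hN.map _ (fun a => ⟨(a, 1), rfl⟩))
      have hsnd := hC (N.map (MonoidHom.snd _ _))
      rcases hfst with h1 | h1 | h1 <;> rcases hsnd with h2 | h2 <;>
        rw [hd, h1, h2] <;> tauto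
    · have hbn : (⊥ : Subgroup (Perm (Fin 3))).Normal := inferInstance
      have htn : (⊤ : Subgroup (Perm (Fin 3))).Normal := inferInstance
      have hAn : A.Normal := inferInstance
      have hb2 : (⊥ : Subgroup (Multiplicative (ZMod 5))).Normal := inferInstance
      have ht2 : (⊤ : Subgroup (Multiplicative (ZMod 5))).Normal := inferInstance
      rintro (rfl | rfl | rfl | rfl | rfl | rfl) <;> exact Subgroup.prod_normal _ _
  have hcp : ∀ (H : Subgroup (Perm (Fin 3))) (K : Subgroup (Multiplicative (ZMod 5))),
      Nat.card (H.prod K) = Nat.card H * Nat.card K := by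
    intro H K
    rw [Nat.card_congr (Subgroup.prodEquiv H K).toEquiv, Nat.card_prod]
  have hcA : Nat.card A = 3 := card_A3
  have hc6 : Nat.card (Perm (Fin 3)) = 6 := by
    rw [Nat.card_eq_fintype_card]; decide
  have hc5 : Nat.card (Multiplicative (ZMod 5)) = 5 := by
    rw [Nat.card_eq_fintype_card]; decide
  -- distinctness via cards
  have key : ∀ (H₁ H₂ : Subgroup (Perm (Fin 3))) (K₁ K₂ : Subgroup (Multiplicative (ZMod 5))),
      Nat.card (H₁.prod K₁) ≠ Nat.card (H₂.prod K₂) → H₁.prod K₁ ≠ H₂.prod K₂ := by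
    intro _ _ _ _ h he; exact h (by rw [he])
  rw [D, hset, finsum_mem_coe_finset, hL]
  rw [Finset.sum_insert, Finset.sum_insert, Finset.sum_insert, Finset.sum_insert,
    Finset.sum_insert, Finset.sum_singleton]
  all_goals first
    | (simp only [hcp, card_bot, card_top, hcA, hc6, hc5, hcard]; norm_num)
    | (simp only [Finset.mem_insert, Finset.mem_singleton, not_or]
       and_intros <;>
         (apply key; simp only [hcp, card_bot, card_top, hcA, hc6, hc5, hcard]; norm_num))
end

section
/- The group A₅ × C₁₅₁₂₈ (the direct product of the alternating group on 5 letters and the cyclic group of order 15128), of order 907680, is a perfect group: D(A₅ × C₁₅₁₂₈) = 2·907680. -/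
open Subgroup
open scoped commutatorElement

/-! ### Subgroups of `ZMod n` -/

private lemma card_addSubgroup_inj {n : ℕ} [NeZero n] {K L : AddSubgroup (ZMod n)}
    (h : Nat.card K = Nat.card L) : K = L := by
  classical
  set d := Nat.card K with hd
  have hd0 : 0 < d := Nat.card_pos
  set M : AddSubgroup (ZMod n) := (zsmulAddGroupHom (d : ℤ) : ZMod n →+ ZMod n).ker with hM
  have hMcard : Nat.card M ≤ d := by
    have h1 := IsAddCyclic.card_nsmul_eq_zero_le (α := ZMod n) (n := d) hd0
    have h2 : Nat.card M = (Finset.univ.filter (fun a : ZMod n => d • a = 0)).card := by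
      rw [Nat.card_eq_fintype_card, ← Fintype.card_subtype]
      apply Fintype.card_congr
      apply Equiv.subtypeEquivRight
      intro x
      simp [hM, AddMonoidHom.mem_ker, zsmulAddGroupHom_apply, natCast_zsmul]
    rw [h2]; exact h1
  have key : ∀ (K' : AddSubgroup (ZMod n)), Nat.card K' = d → K' = M := by
    intro K' hK'
    apply AddSubgroup.eq_of_le_of_card_ge
    · intro x hx
      have h1 : addOrderOf (⟨x, hx⟩ : K') ∣ d := hK' ▸ addOrderOf_dvd_natCard _
      have h2 : d • (⟨x, hx⟩ : K') = 0 := addOrderOf_dvd_iff_nsmul_eq_zero.mp h1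
      have h3 : d • x = 0 := congrArg Subtype.val h2
      simp only [hM, AddMonoidHom.mem_ker, zsmulAddGroupHom_apply, natCast_zsmul]
      exact h3
    · rw [hK']; exact hMcard
  rw [key K rfl, key L h.symm]

private lemma exists_addSubgroup_card {n : ℕ} [NeZero n] {d : ℕ} (hd : d ∣ n) :
    ∃ K : AddSubgroup (ZMod n), Nat.card K = d := by
  refine ⟨AddSubgroup.zmultiples ((n / d : ℕ) : ZMod n), ?_⟩
  rw [Nat.card_zmultiples, ZMod.addOrderOf_coe _ (NeZero.ne n),
    Nat.gcd_eq_right (Nat.div_dvd_of_dvd hd), Nat.div_div_self hd (NeZero.ne n)]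

private lemma addSum : ∑ᶠ K : AddSubgroup (ZMod 15128), Nat.card K = 29760 := by
  classical
  letI : Fintype (AddSubgroup (ZMod 15128)) := Fintype.ofFinite _
  rw [finsum_eq_sum_of_fintype]
  rw [show (29760 : ℕ) = ∑ d ∈ Nat.divisors 15128, d by
    rw [show (15128 : ℕ) = 8 * (31 * 61) by norm_num, Nat.divisors_mul, Nat.divisors_mul]; decide]
  refine Finset.sum_bij (fun K _ => Nat.card K) ?_ ?_ ?_ ?_
  · intro K _
    refine Nat.mem_divisors.mpr ⟨?_, by norm_num⟩
    have := AddSubgroup.card_addSubgroup_dvd_card K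
    rwa [Nat.card_eq_fintype_card (α := ZMod 15128), ZMod.card] at this
  · intro K _ L _ h; exact card_addSubgroup_inj h
  · intro d hd
    obtain ⟨K, hK⟩ := exists_addSubgroup_card (n := 15128) (Nat.mem_divisors.mp hd).1
    exact ⟨K, Finset.mem_univ _, hK⟩
  · intro K _; rfl

private lemma mulSum : ∑ᶠ K : Subgroup (Multiplicative (ZMod 15128)), Nat.card K = 29760 := by
  classical
  letI : Fintype (AddSubgroup (ZMod 15128)) := Fintype.ofFinite _
  letI : Fintype (Subgroup (Multiplicative (ZMod 15128))) := Fintype.ofFinite _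
  rw [finsum_eq_sum_of_fintype, ← addSum, finsum_eq_sum_of_fintype]
  exact (Fintype.sum_equiv (AddSubgroup.toSubgroup (A := ZMod 15128)).toEquiv
    (fun K => Nat.card K) (fun K => Nat.card K) (fun K => rfl)).symm

/-! ### A₅ facts -/

private lemma commutator_A5 : commutator (alternatingGroup (Fin 5)) = ⊤ := by
  have hnontriv : ∃ a b : alternatingGroup (Fin 5), a * b ≠ b * a := by
    refine ⟨⟨Equiv.swap 0 1 * Equiv.swap 1 2, by rw [Equiv.Perm.mem_alternatingGroup]; decide⟩,
      ⟨Equiv.swap 2 3 * Equiv.swap 3 4, by rw [Equiv.Perm.mem_alternatingGroup]; decide⟩, ?_⟩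
    intro h
    have := congrArg Subtype.val h
    exact absurd this (by decide)
  have hnorm : (_root_.commutator (alternatingGroup (Fin 5))).Normal := by
    rw [_root_.commutator_def]; exact Subgroup.commutator_normal ⊤ ⊤
  rcases Subgroup.Normal.eq_bot_or_eq_top hnorm with h | h
  · exfalso
    obtain ⟨a, b, hab⟩ := hnontriv
    have : ⁅a, b⁆ ∈ _root_.commutator (alternatingGroup (Fin 5)) :=
      Subgroup.commutator_mem_commutator (Subgroup.mem_top a) (Subgroup.mem_top b)
    rw [h, Subgroup.mem_bot] at this
    exact hab (commutatorElement_eq_one_iff_mul_comm.mp this)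
  · exact h

/-! ### Goursat classification -/

private lemma normal_classification {C : Type*} [CommGroup C]
    (N : Subgroup (alternatingGroup (Fin 5) × C)) (hN : N.Normal) :
    N = (⊥ : Subgroup (alternatingGroup (Fin 5))).prod
        (N.map (MonoidHom.snd _ _)) ∨
    N = (⊤ : Subgroup (alternatingGroup (Fin 5))).prod
        (N.map (MonoidHom.snd _ _)) := by
  have hfst : Function.Surjective (MonoidHom.fst (alternatingGroup (Fin 5)) C) :=
    fun x => ⟨(x, 1), rfl⟩
  have hmap : (N.map (MonoidHom.fst _ _)).Normal := Subgroup.Normal.map hN _ hfst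
  rcases hmap.eq_bot_or_eq_top with h | h
  · left
    ext ⟨x, y⟩
    simp only [Subgroup.mem_prod, Subgroup.mem_bot, Subgroup.mem_map]
    constructor
    · intro hxy
      have hx : x ∈ N.map (MonoidHom.fst _ _) := ⟨(x, y), hxy, rfl⟩
      rw [h, Subgroup.mem_bot] at hx
      exact ⟨hx, ⟨(x, y), hxy, rfl⟩⟩
    · rintro ⟨hx, ⟨⟨x', y'⟩, hmem, hy⟩⟩
      have hx' : x' ∈ N.map (MonoidHom.fst _ _) := ⟨(x', y'), hmem, rfl⟩
      rw [h, Subgroup.mem_bot] at hx'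
      have : ((x, y) : _ × C) = (x', y') := by
        simp only [MonoidHom.coe_snd] at hy
        simp [hx, hx', ← hy]
      rw [this]; exact hmem
  · right
    have key : ∀ a : alternatingGroup (Fin 5), ((a, 1) : _ × C) ∈ N := by
      have htop : ∀ a : alternatingGroup (Fin 5),
          a ∈ Subgroup.closure {g : alternatingGroup (Fin 5) |
            ∃ g₁ ∈ (⊤ : Subgroup (alternatingGroup (Fin 5))), ∃ g₂ ∈ (⊤ : Subgroup (alternatingGroup (Fin 5))), ⁅g₁, g₂⁆ = g} := by
        intro a
        rw [← Subgroup.commutator_def, ← commutator_def, commutator_A5]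
        trivial
      intro a
      refine Subgroup.closure_induction ?_ ?_ ?_ ?_ (htop a)
      · rintro g ⟨g₁, -, g₂, -, rfl⟩
        obtain ⟨⟨x₁, c₁⟩, hx₁, hfx₁⟩ :
            ∃ p ∈ N, (MonoidHom.fst (alternatingGroup (Fin 5)) C) p = g₁ := by
          have : g₁ ∈ N.map (MonoidHom.fst _ _) := by rw [h]; trivial
          exact Subgroup.mem_map.mp this
        have hconj : (g₂, (1 : C)) * (x₁, c₁)⁻¹ * ((g₂ : alternatingGroup (Fin 5)), (1 : C))⁻¹ ∈ N :=
          hN.conj_mem _ (inv_mem hx₁) _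
        have hcomm : ((x₁, c₁) : _ × C) * ((g₂, 1) * (x₁, c₁)⁻¹ * (g₂, 1)⁻¹) ∈ N :=
          mul_mem hx₁ hconj
        have heq : ((x₁, c₁) : _ × C) * ((g₂, 1) * (x₁, c₁)⁻¹ * (g₂, 1)⁻¹)
            = (⁅g₁, g₂⁆, 1) := by
          simp only [MonoidHom.coe_fst] at hfx₁
          subst hfx₁
          ext
          · simp [commutatorElement_def, mul_assoc]
          · simp [commutatorElement_def, mul_comm, mul_assoc]
        rwa [heq] at hcomm
      · exact one_mem N
      · intro g₁ g₂ _ _ h₁ h₂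
        have := mul_mem h₁ h₂
        simpa using this
      · intro g _ hg
        have := inv_mem hg
        simpa using this
    ext ⟨x, y⟩
    simp only [Subgroup.mem_prod, Subgroup.mem_top, true_and, Subgroup.mem_map]
    constructor
    · intro hxy; exact ⟨(x, y), hxy, rfl⟩
    · rintro ⟨⟨x', y'⟩, hmem, hy⟩
      simp only [MonoidHom.coe_snd] at hy
      subst hy
      have h1 : ((x * x'⁻¹, (1 : C)) : _ × C) ∈ N := key _
      have := mul_mem h1 hmem
      simpa [mul_assoc] using this

private lemma normal_set_eq {C : Type*} [CommGroup C] :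
    {N : Subgroup (alternatingGroup (Fin 5) × C) | N.Normal} =
      Set.range (fun K : Subgroup C => (⊥ : Subgroup (alternatingGroup (Fin 5))).prod K) ∪
      Set.range (fun K : Subgroup C => (⊤ : Subgroup (alternatingGroup (Fin 5))).prod K) := by
  ext N
  constructor
  · intro hN
    rcases normal_classification N hN with h | h
    · exact Or.inl ⟨_, h.symm⟩
    · exact Or.inr ⟨_, h.symm⟩
  · rintro (⟨K, rfl⟩ | ⟨K, rfl⟩) <;>
    · haveI : K.Normal := K.normal_of_comm
      exact Subgroup.prod_normal _ _




/-- The group `A₅ × C₁₅₁₂₈`, of order 907680, is a perfect group. -/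
theorem stmt_10 :
    D (alternatingGroup (Fin 5) × Multiplicative (ZMod 15128)) = 2 * 907680 ∧
      Nat.card (alternatingGroup (Fin 5) × Multiplicative (ZMod 15128)) = 907680 := by
  classical
  have hcA : Nat.card (alternatingGroup (Fin 5)) = 60 := by
    rw [Nat.card_eq_fintype_card]
    have h := two_mul_card_alternatingGroup (α := Fin 5)
    rw [Fintype.card_perm, Fintype.card_fin, show Nat.factorial 5 = 120 by decide] at h
    omega
  have hcC : Nat.card (Multiplicative (ZMod 15128)) = 15128 := by
    rw [Nat.card_congr Multiplicative.toAdd, Nat.card_zmod]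
  have hcard : Nat.card (alternatingGroup (Fin 5) × Multiplicative (ZMod 15128)) = 907680 := by
    rw [Nat.card_prod, hcA, hcC]
  refine ⟨?_, hcard⟩
  rw [D, normal_set_eq]
  have hinj1 : Function.Injective
      (fun K : Subgroup (Multiplicative (ZMod 15128)) =>
        (⊥ : Subgroup (alternatingGroup (Fin 5))).prod K) := by
    intro K K' h
    ext k
    have h1 : ((1, k) : _ × Multiplicative (ZMod 15128)) ∈
        (⊥ : Subgroup (alternatingGroup (Fin 5))).prod K ↔
        ((1, k) : _ × Multiplicative (ZMod 15128)) ∈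
        (⊥ : Subgroup (alternatingGroup (Fin 5))).prod K' := by simp only [] at h; rw [h]
    simpa [Subgroup.mem_prod] using h1
  have hinj2 : Function.Injective
      (fun K : Subgroup (Multiplicative (ZMod 15128)) =>
        (⊤ : Subgroup (alternatingGroup (Fin 5))).prod K) := by
    intro K K' h
    ext k
    have h1 : ((1, k) : _ × Multiplicative (ZMod 15128)) ∈
        (⊤ : Subgroup (alternatingGroup (Fin 5))).prod K ↔
        ((1, k) : _ × Multiplicative (ZMod 15128)) ∈
        (⊤ : Subgroup (alternatingGroup (Fin 5))).prod K' := by simp only [] at h; rw [h]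
    simpa [Subgroup.mem_prod] using h1
  have hdisj : Disjoint
      (Set.range (fun K : Subgroup (Multiplicative (ZMod 15128)) =>
        (⊥ : Subgroup (alternatingGroup (Fin 5))).prod K))
      (Set.range (fun K : Subgroup (Multiplicative (ZMod 15128)) =>
        (⊤ : Subgroup (alternatingGroup (Fin 5))).prod K)) := by
    rw [Set.disjoint_left]
    rintro N ⟨K, rfl⟩ ⟨K', hK'⟩
    obtain ⟨a, ha⟩ := exists_ne (1 : alternatingGroup (Fin 5))
    have h1 : ((a, 1) : _ × Multiplicative (ZMod 15128)) ∈
        (⊤ : Subgroup (alternatingGroup (Fin 5))).prod K' :=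
      Subgroup.mem_prod.mpr ⟨trivial, one_mem _⟩
    simp only [] at hK'
    rw [hK'] at h1
    exact ha (Subgroup.mem_bot.mp (Subgroup.mem_prod.mp h1).1)
  rw [finsum_mem_union hdisj (Set.finite_range _) (Set.finite_range _),
    finsum_mem_range hinj1, finsum_mem_range hinj2]
  have h1 : ∀ K : Subgroup (Multiplicative (ZMod 15128)),
      Nat.card ((⊥ : Subgroup (alternatingGroup (Fin 5))).prod K) = Nat.card K := by
    intro K
    rw [Nat.card_congr (Subgroup.prodEquiv _ _).toEquiv, Nat.card_prod, Subgroup.card_bot, one_mul]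
  have h2 : ∀ K : Subgroup (Multiplicative (ZMod 15128)),
      Nat.card ((⊤ : Subgroup (alternatingGroup (Fin 5))).prod K) = 60 * Nat.card K := by
    intro K
    rw [Nat.card_congr (Subgroup.prodEquiv _ _).toEquiv, Nat.card_prod, Subgroup.card_top, hcA]
  simp_rw [h1, h2]
  letI : Fintype (Subgroup (Multiplicative (ZMod 15128))) := Fintype.ofFinite _
  rw [finsum_eq_sum_of_fintype, finsum_eq_sum_of_fintype, ← Finset.mul_sum,
    ← finsum_eq_sum_of_fintype, mulSum]
  norm_num
end

section
/- Abelian Quotient Theorem: if G is a finite group with D(G) ≤ 2·|G|, then every abelian quotient of G is cyclic; that is, for every normal subgroup K of G such that the quotient group G/K is commutative, G/K is cyclic. -/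
section Aux

open Finset in
lemma aux_lcm_eq_prod {ι : Type} [DecidableEq ι] (s : Finset ι) (n : ι → ℕ)
    (h : ∀ i ∈ s, ∀ j ∈ s, i ≠ j → Nat.Coprime (n i) (n j)) :
    s.lcm n = ∏ i ∈ s, n i := by
  induction s using Finset.induction_on with
  | empty => simp
  | @insert a s' ha ih =>
    rw [Finset.lcm_insert, Finset.prod_insert ha]
    have hcop : Nat.Coprime (n a) (∏ i ∈ s', n i) :=
      Nat.Coprime.prod_right fun i hi =>
        h a (mem_insert_self a s') i (mem_insert_of_mem hi) (by rintro rfl; exact ha hi)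
    have hdvd : s'.lcm n ∣ ∏ i ∈ s', n i :=
      Finset.lcm_dvd fun i hi => Finset.dvd_prod_of_mem n hi
    rw [ih (fun i hi j hj hij => h i (mem_insert_of_mem hi) j (mem_insert_of_mem hj) hij)]
    exact Nat.Coprime.lcm_eq_mul hcop

lemma aux_exists_surj (A : Type*) [CommGroup A] [Finite A] (h : ¬ IsCyclic A) :
    ∃ p : ℕ, p.Prime ∧
      ∃ f : A →* Multiplicative (ZMod p × ZMod p), Function.Surjective f := by
  classical
  obtain ⟨ι, hι, n, hn, ⟨e⟩⟩ := CommGroup.equiv_prod_multiplicative_zmod_of_finite A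
  by_cases hcop : ∀ i j, i ≠ j → Nat.Coprime (n i) (n j)
  · exfalso
    apply h
    have hNZ : ∀ i, NeZero (n i) := fun i => ⟨by have := hn i; omega⟩
    have hexp : ∀ i, Monoid.exponent (Multiplicative (ZMod (n i))) = n i := by
      intro i
      haveI := hNZ i
      rw [IsCyclic.exponent_eq_card]
      simp
    have hcyc : IsCyclic (∀ i, Multiplicative (ZMod (n i))) := by
      apply IsCyclic.of_exponent_eq_card
      rw [Monoid.exponent_pi, Nat.card_pi]
      have : ∀ i, Nat.card (Multiplicative (ZMod (n i))) = n i := by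
        intro i
        haveI := hNZ i
        simp
      simp_rw [hexp, this]
      exact aux_lcm_eq_prod Finset.univ n (fun i _ j _ hij => hcop i j hij)
    exact isCyclic_of_surjective e.symm.toMonoidHom e.symm.surjective
  · push_neg at hcop
    obtain ⟨i, j, hij, hnc⟩ := hcop
    obtain ⟨p, hp, hpi, hpj⟩ := Nat.Prime.not_coprime_iff_dvd.mp hnc
    haveI : Fact p.Prime := ⟨hp⟩
    refine ⟨p, hp, ?_⟩
    let F : (∀ k, Multiplicative (ZMod (n k))) →* Multiplicative (ZMod p × ZMod p) :=
      MonoidHom.mk' (fun x => Multiplicative.ofAdd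
        (ZMod.castHom hpi (ZMod p) (x i).toAdd, ZMod.castHom hpj (ZMod p) (x j).toAdd))
        (fun x y => by
          simp only [Pi.mul_apply, toAdd_mul, map_add, Prod.mk_add_mk, ← ofAdd_add])
    have hFsurj : Function.Surjective F := by
      intro z
      set a : ZMod p := (Multiplicative.toAdd z).1 with ha_def
      set b : ZMod p := (Multiplicative.toAdd z).2 with hb_def
      let x : ∀ k, Multiplicative (ZMod (n k)) :=
        Pi.mulSingle i (Multiplicative.ofAdd ((a.val : ZMod (n i)))) *
        Pi.mulSingle j (Multiplicative.ofAdd ((b.val : ZMod (n j))))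
      refine ⟨x, ?_⟩
      have h1 : x i = Multiplicative.ofAdd ((a.val : ZMod (n i))) := by
        simp [x, Pi.mulSingle_eq_same, Pi.mulSingle_eq_of_ne hij, Pi.mulSingle_eq_of_ne hij.symm]
      have h2 : x j = Multiplicative.ofAdd ((b.val : ZMod (n j))) := by
        simp [x, Pi.mulSingle_eq_same, Pi.mulSingle_eq_of_ne hij, Pi.mulSingle_eq_of_ne hij.symm]
      show Multiplicative.ofAdd _ = z
      rw [h1, h2]
      have ha : (ZMod.castHom hpi (ZMod p)) ((Multiplicative.ofAdd
          ((a.val : ZMod (n i)))).toAdd) = a := by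
        simp [ZMod.natCast_rightInverse a]
      have hb : (ZMod.castHom hpj (ZMod p)) ((Multiplicative.ofAdd
          ((b.val : ZMod (n j)))).toAdd) = b := by
        simp [ZMod.natCast_rightInverse b]
      rw [ha, hb]
      show Multiplicative.ofAdd (a, b) = z
      rw [ha_def, hb_def]
      rfl
    exact ⟨F.comp e.toMonoidHom, hFsurj.comp e.surjective⟩

end Aux

/-- Abelian quotient theorem: if `G` is a finite group with `D G ≤ 2·|G|`, then
every abelian quotient of `G` is cyclic. -/
theorem stmt_12 (G : Type*) [Group G] [Finite G] (hD : D G ≤ 2 * Nat.card G)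
    (K : Subgroup G) [K.Normal]
    (hab : ∀ x y : G ⧸ K, x * y = y * x) :
    IsCyclic (G ⧸ K) := by
  classical
  by_contra hnc
  letI : CommGroup (G ⧸ K) := { (inferInstance : Group (G ⧸ K)) with mul_comm := hab }
  obtain ⟨p, hp, f', hf'⟩ := aux_exists_surj (G ⧸ K) hnc
  haveI : Fact p.Prime := ⟨hp⟩
  let f : G →* Multiplicative (ZMod p × ZMod p) := f'.comp (QuotientGroup.mk' K)
  have hf : Function.Surjective f := hf'.comp (QuotientGroup.mk'_surjective K)
  -- the p+1 "lines"
  let v : Option (ZMod p) → ZMod p × ZMod p := fun o => o.elim (0, 1) (fun c => (1, c))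
  let H : Option (ZMod p) → Subgroup (Multiplicative (ZMod p × ZMod p)) :=
    fun o => Subgroup.zpowers (Multiplicative.ofAdd (v o))
  let N : Option (ZMod p) → Subgroup G := fun o => (H o).comap f
  have hp2 : 2 ≤ p := hp.two_le
  -- order of generators
  have hordv : ∀ o, addOrderOf (v o) = p := by
    rintro (_ | c)
    · show addOrderOf ((0 : ZMod p), (1 : ZMod p)) = p
      rw [Prod.addOrderOf, addOrderOf_zero, ZMod.addOrderOf_one, Nat.lcm_one_left]
    · show addOrderOf ((1 : ZMod p), (c : ZMod p)) = p
      rw [Prod.addOrderOf, ZMod.addOrderOf_one]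
      have hdvd : addOrderOf c ∣ p := by
        rw [addOrderOf_dvd_iff_nsmul_eq_zero, nsmul_eq_mul, ZMod.natCast_self, zero_mul]
      exact Nat.dvd_antisymm (Nat.lcm_dvd dvd_rfl hdvd) (Nat.dvd_lcm_left _ _)
  have hcardH : ∀ o, Nat.card (H o) = p := by
    intro o
    rw [Nat.card_zpowers, orderOf_ofAdd_eq_addOrderOf, hordv o]
  have hcardT : Nat.card (Multiplicative (ZMod p × ZMod p)) = p * p := by
    simp [Nat.card_prod]
  -- index of each H o is p
  have hindexH : ∀ o, (H o).index = p := by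
    intro o
    have := Subgroup.card_mul_index (H o)
    rw [hcardH o, hcardT] at this
    have hppos : 0 < p := hp.pos
    exact Nat.eq_of_mul_eq_mul_left hppos this
  -- card of each N o
  have hcardN : ∀ o, Nat.card (N o) * p = Nat.card G := by
    intro o
    have h1 := Subgroup.card_mul_index (N o)
    rwa [Subgroup.index_comap_of_surjective _ hf, hindexH o] at h1
  set m := Nat.card (N none) with hm
  have hmp : m * p = Nat.card G := hcardN none
  have hcardN' : ∀ o, Nat.card (N o) = m := by
    intro o
    have := (hcardN o).trans hmp.symm
    exact Nat.eq_of_mul_eq_mul_right hp.pos this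
  -- m ≥ p ≥ 2
  have hdvd : p * p ∣ Nat.card G := by
    have := Subgroup.card_dvd_of_surjective f hf
    rwa [hcardT] at this
  have hpm : p ∣ m := by
    rw [← hmp] at hdvd
    exact (Nat.mul_dvd_mul_iff_right hp.pos).mp hdvd
  have hGpos : 0 < Nat.card G := Nat.card_pos
  have hmpos : 0 < m := by
    rcases Nat.eq_zero_or_pos m with h0 | h; · rw [h0] at hmp; omega
    exact h
  have hm2 : 2 ≤ m := le_trans hp2 (Nat.le_of_dvd hmpos hpm)
  -- injectivity of N
  have hHinj : Function.Injective H := by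
    intro o o' heq
    have hmem : Multiplicative.ofAdd (v o) ∈ H o' := heq ▸ Subgroup.mem_zpowers _
    rw [Subgroup.mem_zpowers_iff] at hmem
    obtain ⟨k, hk⟩ := hmem
    have hk' : k • (v o') = v o := by
      have : Multiplicative.ofAdd (k • v o') = Multiplicative.ofAdd (v o) := by
        rw [ofAdd_zsmul]; exact hk
      exact Multiplicative.ofAdd.injective this
    haveI : NeZero p := ⟨hp.ne_zero⟩
    match o, o' with
    | none, none => rfl
    | some c, some c' =>
      have h1 : k • ((1 : ZMod p), (c' : ZMod p)) = ((1 : ZMod p), (c : ZMod p)) := hk'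
      rw [Prod.smul_mk, Prod.mk.injEq] at h1
      obtain ⟨hk1, hkc⟩ := h1
      rw [zsmul_eq_mul, mul_one] at hk1
      rw [zsmul_eq_mul, hk1, one_mul] at hkc
      rw [hkc]
    | none, some c' =>
      exfalso
      have h1 : k • ((1 : ZMod p), (c' : ZMod p)) = ((0 : ZMod p), (1 : ZMod p)) := hk'
      rw [Prod.smul_mk, Prod.mk.injEq] at h1
      obtain ⟨hk1, hkc⟩ := h1
      rw [zsmul_eq_mul, mul_one] at hk1
      rw [zsmul_eq_mul, hk1, zero_mul] at hkc
      exact one_ne_zero hkc.symm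
    | some c, none =>
      exfalso
      have h1 : k • ((0 : ZMod p), (1 : ZMod p)) = ((1 : ZMod p), (c : ZMod p)) := hk'
      rw [Prod.smul_mk, Prod.mk.injEq] at h1
      obtain ⟨hk1, _⟩ := h1
      rw [zsmul_eq_mul, mul_zero] at hk1
      exact one_ne_zero hk1.symm
  have hNinj : Function.Injective N := fun o o' h =>
    hHinj (Subgroup.comap_injective hf h)
  -- the finset of normal subgroups we use
  haveI : NeZero p := ⟨hp.ne_zero⟩
  let s : Finset (Subgroup G) :=
    insert ⊥ (insert ⊤ (Finset.image N Finset.univ))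
  have hbot_ne : (⊥ : Subgroup G) ∉ insert ⊤ (Finset.image N Finset.univ) := by
    simp only [Finset.mem_insert, Finset.mem_image, Finset.mem_univ, true_and]
    push_neg
    constructor
    · intro h
      have := congrArg (fun (M : Subgroup G) => Nat.card M) h
      simp only [Subgroup.card_bot, Subgroup.card_top] at this
      rw [← hmp] at this
      nlinarith
    · intro o h
      have := congrArg (fun (M : Subgroup G) => Nat.card M) h
      simp only [hcardN' o, Subgroup.card_bot] at this
      omega
  have htop_ne : (⊤ : Subgroup G) ∉ Finset.image N Finset.univ := by
    simp only [Finset.mem_image, Finset.mem_univ, true_and]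
    rintro ⟨o, h⟩
    have := congrArg (fun (M : Subgroup G) => Nat.card M) h
    simp only [hcardN' o, Subgroup.card_top, ← hmp] at this
    nlinarith
  -- sum over s
  have hsum : ∑ M ∈ s, Nat.card M = 1 + (Nat.card G + (p + 1) * m) := by
    rw [Finset.sum_insert hbot_ne, Finset.sum_insert htop_ne,
      Finset.sum_image (fun o _ o' _ h => hNinj h)]
    have : ∑ o : Option (ZMod p), Nat.card (N o) = (p + 1) * m := by
      rw [Finset.sum_congr rfl (fun o _ => hcardN' o), Finset.sum_const, smul_eq_mul]
      congr 1
      simp [Fintype.card_option, ZMod.card, add_comm]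
    rw [this, Subgroup.card_bot, Subgroup.card_top]
  -- D G bounds the sum
  haveI : Finite (Subgroup G) := by
    exact Finite.of_injective (fun (M : Subgroup G) => (M : Set G)) SetLike.coe_injective
  have hfin : {N : Subgroup G | N.Normal}.Finite := Set.toFinite _
  have hDval : D G = ∑ M ∈ hfin.toFinset, Nat.card M := by
    rw [D]
    exact finsum_mem_eq_finite_toFinset_sum _ hfin
  have hsub : s ⊆ hfin.toFinset := by
    intro M hM
    rw [Set.Finite.mem_toFinset]
    simp only [s, Finset.mem_insert, Finset.mem_image, Finset.mem_univ, true_and] at hM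
    rcases hM with rfl | rfl | ⟨o, rfl⟩
    · exact (inferInstance : (⊥ : Subgroup G).Normal)
    · exact (inferInstance : (⊤ : Subgroup G).Normal)
    · exact Subgroup.Normal.comap inferInstance f
  have hle : ∑ M ∈ s, Nat.card M ≤ D G := by
    rw [hDval]
    exact Finset.sum_le_sum_of_subset hsub
  rw [hsum] at hle
  rw [← hmp] at hD hle
  nlinarith
end

section
/- If G is a finite group with D(G) ≤ 2·|G|, then G has a normal generator: there exists an element h ∈ G such that the only normal subgroup of G containing h is G itself. -/
/-- If `D G ≤ 2·|G|` then `G` has a normal generator: an element contained in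
no proper normal subgroup. -/
theorem stmt_15 (G : Type*) [Group G] [Finite G] (hD : D G ≤ 2 * Nat.card G) :
    ∃ h : G, ∀ N : Subgroup G, N.Normal → h ∈ N → N = ⊤ := by
  by_contra hcon
  push_neg at hcon
  -- every element lies in a proper normal subgroup
  cases nonempty_fintype G
  rcases subsingleton_or_nontrivial G with hs | hs
  · obtain ⟨N, hN, hmem, hne⟩ := hcon 1
    refine hne ?_
    ext x
    simp only [Subgroup.mem_top, iff_true]
    rw [Subsingleton.elim x (1 : G)]
    exact N.one_mem
  · classical
    have hfin : ({N : Subgroup G | N.Normal}).Finite := Set.toFinite _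
    set T : Finset (Subgroup G) := hfin.toFinset with hT
    have hDT : D G = ∑ N ∈ T, Nat.card N := by
      rw [D, ← finsum_mem_coe_finset]
      congr 1
      simp [hT]
    have htopT : (⊤ : Subgroup G) ∈ T := by simp [hT]
    have hbotT : (⊥ : Subgroup G) ∈ T := by simp [hT]
    set T' : Finset (Subgroup G) := (T.erase ⊤).erase ⊥ with hT'
    -- every element lies in some member of T'
    obtain ⟨g, hg⟩ := exists_ne (1 : G)
    obtain ⟨N₀, hN₀, hgN₀, hN₀ne⟩ := hcon g
    have hN₀T' : N₀ ∈ T' := by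
      refine Finset.mem_erase.2 ⟨?_, Finset.mem_erase.2 ⟨hN₀ne, by simp [hT, hN₀]⟩⟩
      rintro rfl
      exact hg (Subgroup.mem_bot.1 hgN₀)
    have hcover : ∀ x : G, ∃ N ∈ T', x ∈ N := by
      intro x
      by_cases hx : x = 1
      · exact ⟨N₀, hN₀T', hx ▸ N₀.one_mem⟩
      · obtain ⟨N, hN, hxN, hNne⟩ := hcon x
        refine ⟨N, Finset.mem_erase.2 ⟨?_, Finset.mem_erase.2 ⟨hNne, by simp [hT, hN]⟩⟩, hxN⟩
        rintro rfl
        exact hx (Subgroup.mem_bot.1 hxN)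
    -- counting: card G ≤ ∑ over T'
    have hsub : (Finset.univ : Finset G) ⊆ T'.biUnion (fun N => (N : Set G).toFinset) := by
      intro x _
      obtain ⟨N, hNT', hxN⟩ := hcover x
      exact Finset.mem_biUnion.2 ⟨N, hNT', Set.mem_toFinset.2 hxN⟩
    have hcard : Nat.card G ≤ ∑ N ∈ T', Nat.card N := by
      calc Nat.card G = (Finset.univ : Finset G).card := by
            simp [Nat.card_eq_fintype_card]
        _ ≤ (T'.biUnion (fun N => (N : Set G).toFinset)).card :=
            Finset.card_le_card hsub
        _ ≤ ∑ N ∈ T', ((N : Set G).toFinset).card := Finset.card_biUnion_le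
        _ = ∑ N ∈ T', Nat.card N := by
            refine Finset.sum_congr rfl fun N _ => ?_
            simp [Set.toFinset_card, Nat.card_eq_fintype_card]
    -- split off ⊤ and ⊥ from the sum
    have hbot' : (⊥ : Subgroup G) ∈ T.erase ⊤ :=
      Finset.mem_erase.2 ⟨bot_ne_top, hbotT⟩
    have hsplit : ∑ N ∈ T, Nat.card N
        = Nat.card G + (1 + ∑ N ∈ T', Nat.card N) := by
      rw [← Finset.add_sum_erase T _ htopT, ← Finset.add_sum_erase (T.erase ⊤) _ hbot']
      congr 1
      · exact Subgroup.card_top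
      · congr 1
        simp
    have hpos : 1 ≤ Nat.card G := Nat.one_le_iff_ne_zero.2 Nat.card_pos.ne'
    rw [hDT, hsplit] at hD
    omega
end

section
/- If G is a finite group with D(G) ≤ 2·|G|, then for each prime p, G has at most one normal subgroup of index p: any two normal subgroups of G of index p are equal. -/
/-- For a normal subgroup of prime index `p`, there is a homomorphism to
`Multiplicative (ZMod p)` with kernel `N`. -/
lemma exists_hom_ker_eq {G : Type*} [Group G] {p : ℕ} (hp : p.Prime)
    (N : Subgroup G) (hN : N.Normal) (hNp : N.index = p) :
    ∃ f : G →* Multiplicative (ZMod p), f.ker = N := by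
  haveI : Fact p.Prime := ⟨hp⟩
  have hcard : Nat.card (G ⧸ N) = p := by rw [← Subgroup.index_eq_card, hNp]
  haveI : IsCyclic (G ⧸ N) := isCyclic_of_prime_card hcard
  have e : (G ⧸ N) ≃* Multiplicative (ZMod p) := by
    subst hcard
    exact (zmodCyclicMulEquiv inferInstance).symm
  refine ⟨e.toMonoidHom.comp (QuotientGroup.mk' N), ?_⟩
  ext x
  simp [MonoidHom.mem_ker, map_eq_one_iff _ e.injective, QuotientGroup.eq_one_iff]

/-- Two nested subgroups with the same finite index are equal. -/
lemma eq_of_le_of_index_eq' {G : Type*} [Group G] [Finite G] {p : ℕ} (hp : 0 < p)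
    {H K : Subgroup G} (hle : H ≤ K) (hH : H.index = p) (hK : K.index = p) : H = K := by
  refine Subgroup.eq_of_le_of_card_ge hle ?_
  have h1 := H.card_mul_index
  have h2 := K.card_mul_index
  rw [hH] at h1; rw [hK] at h2
  exact le_of_eq (Nat.eq_of_mul_eq_mul_right hp (h2.trans h1.symm))

/-- If `D G ≤ 2·|G|`, then for each prime `p`, `G` has at most one normal subgroup
of index `p`. -/
theorem stmt_18 (G : Type*) [Group G] [Finite G] (hD : D G ≤ 2 * Nat.card G)
    (p : ℕ) (hp : p.Prime) (N N' : Subgroup G) (hN : N.Normal) (hN' : N'.Normal)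
    (hNp : N.index = p) (hN'p : N'.index = p) :
    N = N' := by
  classical
  by_contra hne
  haveI : Fact p.Prime := ⟨hp⟩
  haveI : NeZero p := ⟨hp.ne_zero⟩
  obtain ⟨f, hf⟩ := exists_hom_ker_eq hp N hN hNp
  obtain ⟨f', hf'⟩ := exists_hom_ker_eq hp N' hN' hN'p
  -- an element of `N'` not in `N`
  have hnle : ¬ N' ≤ N := fun hle => hne (eq_of_le_of_index_eq' hp.pos hle hN'p hNp).symm
  have hnle' : ¬ N ≤ N' := fun hle => hne (eq_of_le_of_index_eq' hp.pos hle hNp hN'p)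
  obtain ⟨g, hgN', hgN⟩ := SetLike.not_le_iff_exists.mp hnle
  have hfg : f g ≠ 1 := fun h => hgN (hf ▸ h)
  have hf'g : f' g = 1 := by
    have h := hgN'; rw [← hf'] at h; exact h
  -- the family of kernels
  set M : ZMod p → Subgroup G := fun a => (f * f' ^ a.val).ker with hM
  have hgMa : ∀ a, g ∉ M a := by
    intro a hmem
    rw [hM, MonoidHom.mem_ker, MonoidHom.mul_apply, MonoidHom.pow_apply, hf'g,
      one_pow, mul_one] at hmem
    exact hfg hmem
  have hMN' : ∀ a, M a ≠ N' := fun a h => hgMa a (h ▸ hgN')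
  -- index of each kernel is p
  have hMidx : ∀ a, (M a).index = p := by
    intro a
    rw [hM, Subgroup.index_ker]
    have hdvd : Nat.card (f * f' ^ a.val).range ∣ p := by
      have := Subgroup.card_subgroup_dvd_card (f * f' ^ a.val).range
      simpa [Nat.card_eq_fintype_card, ZMod.card] using this
    rcases (Nat.dvd_prime hp).mp hdvd with h | h
    · exfalso
      rw [Subgroup.card_eq_one] at h
      have : (f * f' ^ a.val) g ∈ (f * f' ^ a.val).range := ⟨g, rfl⟩
      rw [h, Subgroup.mem_bot, MonoidHom.mul_apply, MonoidHom.pow_apply, hf'g,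
        one_pow, mul_one] at this
      exact hfg this
    · exact h
  -- the kernels are pairwise distinct
  have hMinj : Function.Injective M := by
    intro a b hab
    by_contra hne'
    have hle : M a ≤ N := by
      intro x hx
      have hxa := hx
      have hxb : x ∈ M b := hab ▸ hx
      rw [hM, MonoidHom.mem_ker, MonoidHom.mul_apply, MonoidHom.pow_apply] at hxa hxb
      have heq : (f' x) ^ a.val = (f' x) ^ b.val := by
        have := hxa.trans hxb.symm
        exact mul_left_cancel this
      -- work in the additive group ZMod p
      have heq' : (a.val : ZMod p) * (Multiplicative.toAdd (f' x))
          = (b.val : ZMod p) * (Multiplicative.toAdd (f' x)) := by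
        have := congrArg Multiplicative.toAdd heq
        simpa [toAdd_pow, nsmul_eq_mul] using this
      rw [ZMod.natCast_val, ZMod.natCast_val, ZMod.cast_id, ZMod.cast_id] at heq'
      have hy : Multiplicative.toAdd (f' x) = 0 := by
        by_contra hy0
        exact hne' (mul_right_cancel₀ hy0 heq')
      have hxN' : x ∈ N' := by
        rw [← hf', MonoidHom.mem_ker]
        exact Multiplicative.toAdd.injective (by simpa using hy)
      have hfx : f' x = 1 := by
        have h := hxN'; rw [← hf'] at h; exact h
      rw [hfx, one_pow, mul_one] at hxa
      rw [← hf]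
      exact MonoidHom.mem_ker.mpr hxa
    have : M a = N := eq_of_le_of_index_eq' hp.pos hle (hMidx a) hNp
    -- but also M a ≤ N' by the same argument with roles swapped... instead:
    -- g ∈ N' and by symmetry we derive N ≤ N' : note M a ≤ N' too
    have hle' : M a ≤ N' := by
      intro x hx
      have hxa := hx
      have hxb : x ∈ M b := hab ▸ hx
      rw [hM, MonoidHom.mem_ker, MonoidHom.mul_apply, MonoidHom.pow_apply] at hxa hxb
      have heq : (f' x) ^ a.val = (f' x) ^ b.val := mul_left_cancel (hxa.trans hxb.symm)
      have heq' : (a.val : ZMod p) * (Multiplicative.toAdd (f' x))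
          = (b.val : ZMod p) * (Multiplicative.toAdd (f' x)) := by
        have := congrArg Multiplicative.toAdd heq
        simpa [toAdd_pow, nsmul_eq_mul] using this
      rw [ZMod.natCast_val, ZMod.natCast_val, ZMod.cast_id, ZMod.cast_id] at heq'
      have hy : Multiplicative.toAdd (f' x) = 0 := by
        by_contra hy0
        exact hne' (mul_right_cancel₀ hy0 heq')
      rw [← hf', MonoidHom.mem_ker]
      exact Multiplicative.toAdd.injective (by simpa using hy)
    exact hnle' (this ▸ hle')
  -- all subgroups involved have the same cardinality
  set k := Nat.card N with hk
  have hkpos : 0 < k := Nat.card_pos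
  have hcardG : Nat.card G = k * p := by rw [← N.card_mul_index, hNp]
  have hcard_of_idx : ∀ H : Subgroup G, H.index = p → Nat.card H = k := by
    intro H hH
    have h1 := H.card_mul_index
    rw [hH, hcardG] at h1
    exact Nat.eq_of_mul_eq_mul_right hp.pos h1
  -- the finset of witnesses
  set T : Finset (Subgroup G) :=
    insert ⊤ (insert N' (Finset.image M Finset.univ)) with hT
  -- sum over T
  have hN'notIm : N' ∉ Finset.image M Finset.univ := by
    simp only [Finset.mem_image, Finset.mem_univ, true_and]
    rintro ⟨a, ha⟩
    exact hMN' a ha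
  have hTopNot : (⊤ : Subgroup G) ∉ insert N' (Finset.image M Finset.univ) := by
    simp only [Finset.mem_insert, Finset.mem_image, Finset.mem_univ, true_and]
    rintro (h | ⟨a, ha⟩)
    · exact hp.one_lt.ne' (by rw [← hN'p, ← h, Subgroup.index_top])
    · exact hp.one_lt.ne' (by rw [← hMidx a, ha, Subgroup.index_top])
  have hsumT : ∑ H ∈ T, Nat.card H = 2 * (k * p) + k := by
    rw [hT, Finset.sum_insert hTopNot, Finset.sum_insert hN'notIm,
      Finset.sum_image (fun a _ b _ h => hMinj h)]
    have h1 : Nat.card (⊤ : Subgroup G) = k * p := by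
      rw [← hcardG]; exact Subgroup.card_top
    have h2 : Nat.card N' = k := hcard_of_idx N' hN'p
    have h3 : ∀ a : ZMod p, Nat.card (M a) = k := fun a => hcard_of_idx (M a) (hMidx a)
    rw [h1, h2]
    have : ∑ a : ZMod p, Nat.card (M a) = p * k := by
      rw [Finset.sum_congr rfl (fun a _ => h3 a), Finset.sum_const, Finset.card_univ,
        ZMod.card, smul_eq_mul]
    rw [this]
    ring
  -- D G is at least the sum over T
  have hfin : ({N : Subgroup G | N.Normal}).Finite := Set.toFinite _
  have hDsum : D G = ∑ H ∈ hfin.toFinset, Nat.card H :=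
    finsum_mem_eq_finite_toFinset_sum _ hfin
  have hsub : T ⊆ hfin.toFinset := by
    intro H hH
    rw [Set.Finite.mem_toFinset]
    simp only [Set.mem_setOf_eq]
    simp only [hT, Finset.mem_insert, Finset.mem_image, Finset.mem_univ, true_and] at hH
    rcases hH with rfl | rfl | ⟨a, rfl⟩
    · exact inferInstance
    · exact hN'
    · exact (f * f' ^ (a : ZMod p).val).normal_ker
  have hle : ∑ H ∈ T, Nat.card H ≤ D G := by
    rw [hDsum]
    exact Finset.sum_le_sum_of_subset hsub
  rw [hsumT] at hle
  rw [hcardG] at hD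
  omega
end
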